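/- Let C be a circle with center O ∈ ℝ² and radius r > 0, and let A ∈ ℝ² be a point with ‖A−O‖ ≠ r and A ≠ O. Define B := A + (1 − r²/‖A−O‖²)(O−A). For any point R on C not on the line through A and O, the unique circle through A and R that is tangent at R to the line through R and O also passes through B. -/
import Mathlib


open scoped RealInnerProductSpace

theorem tangent_circle_through_inverse_point
    (A O : EuclideanSpace ℝ (Fin 2)) (r : ℝ) (hr : 0 < r)
    (hAO : A ≠ O) (hAr : ‖A - O‖ ≠ r)
    (B : EuclideanSpace ℝ (Fin 2))
    (hB : B = A + (1 - r ^ 2 / ‖A - O‖ ^ 2) • (O - A))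
    (R : EuclideanSpace ℝ (Fin 2)) (hR : ‖R - O‖ = r)
    (hRline : ¬ Collinear ℝ ({A, O, R} : Set (EuclideanSpace ℝ (Fin 2))))
    (E : EuclideanSpace ℝ (Fin 2)) (γ : ℝ)
    (hAE : ‖A - E‖ = γ) (hRE : ‖R - E‖ = γ)
    (htang : ⟪R - O, R - E⟫ = 0) :
    ‖B - E‖ = γ := by
  have hγ : 0 ≤ γ := hAE ▸ norm_nonneg _
  have hv : ‖A - O‖ ≠ 0 := fun h => hAO (by rwa [norm_sub_eq_zero_iff] at h)
  set t : ℝ := 1 - r ^ 2 / ‖A - O‖ ^ 2 with ht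
  have hBE : B - E = (A - E) + t • (O - A) := by rw [hB]; abel
  have hRd : R - E = (R - O) + ((O - A) + (A - E)) := by abel
  have h2 : ⟪R - O, (O - A) + (A - E)⟫ = - r ^ 2 := by
    have h := htang
    rw [hRd, inner_add_right, real_inner_self_eq_norm_sq, hR] at h
    linarith
  have h3 : γ ^ 2 = r ^ 2 + 2 * (- r ^ 2) + ‖(O - A) + (A - E)‖ ^ 2 := by
    rw [← hRE, hRd, norm_add_sq_real, hR, h2]
  have h4 : ‖(O - A) + (A - E)‖ ^ 2 = ‖O - A‖ ^ 2 + 2 * ⟪O - A, A - E⟫ + γ ^ 2 := by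
    rw [norm_add_sq_real, hAE]
  have key : 2 * ⟪O - A, A - E⟫ = r ^ 2 - ‖O - A‖ ^ 2 := by linarith
  have hrev : ‖O - A‖ = ‖A - O‖ := norm_sub_rev _ _
  have htv : t * ‖A - O‖ ^ 2 = ‖A - O‖ ^ 2 - r ^ 2 := by
    rw [ht]; field_simp
  rw [hrev] at key
  have hcomm : ⟪A - E, O - A⟫ = ⟪O - A, A - E⟫ := real_inner_comm _ _
  have hBE2 : ‖B - E‖ ^ 2 = γ ^ 2 := by
    rw [hBE, norm_add_sq_real, norm_smul, real_inner_smul_right, hAE, hcomm,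
      Real.norm_eq_abs, mul_pow, sq_abs, hrev]
    linear_combination t * key + t * htv
  nlinarith [norm_nonneg (B - E), sq_nonneg (‖B - E‖ - γ)]
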